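/- Let A_1, …, A_m be finite sets (subsets of some ambient type, each a finite set), and let A be the set of all elements that belong to at least two of the sets A_1, …, A_m (equivalently, A = {x : ∃ i ≠ j, x ∈ A_i and x ∈ A_j}). Then |A| = Σ_{r=2}^{m} (−1)^r (r−1) Σ_{I ⊆ {1,…,m}, |I|=r} |∩_{i∈I} A_i|. -/

import Mathlib

open Finset

lemma alt_sum_r_choose (u : ℕ) (hu : u ≠ 0) :
    ∑ r ∈ range (u + 2), (-1 : ℤ) ^ r * (r : ℤ) * ((u+1).choose r : ℤ) = 0 := by
  rw [Finset.sum_range_succ']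
  simp only [Nat.cast_zero, mul_zero, zero_mul, add_zero]
  have h : ∀ s : ℕ, (-1 : ℤ) ^ (s+1) * ((s+1 : ℕ) : ℤ) * ((u+1).choose (s+1) : ℤ)
      = (-(u+1) : ℤ) * ((-1 : ℤ) ^ s * (u.choose s : ℤ)) := by
    intro s
    have := Nat.add_one_mul_choose_eq u s
    have h2 : ((u+1) * u.choose s : ℤ) = ((u+1).choose (s+1) : ℤ) * (s+1 : ℤ) := by
      exact_mod_cast congrArg (Nat.cast : ℕ → ℤ) this
    rw [pow_succ]
    push_cast
    linear_combination ((-1:ℤ)^s) * h2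
  rw [Finset.sum_congr rfl (fun s _ => h s), ← Finset.mul_sum,
    Int.alternating_sum_range_choose_of_ne hu, mul_zero]

lemma key_scalar (m t : ℕ) (ht : t ≤ m) :
    ∑ r ∈ Icc 2 m, (-1 : ℤ) ^ r * ((r : ℤ) - 1) * (t.choose r : ℤ)
      = if 2 ≤ t then 1 else 0 := by
  by_cases h2 : 2 ≤ t
  · rw [if_pos h2]
    have hsub : Icc 2 t ⊆ Icc 2 m := Icc_subset_Icc le_rfl ht
    rw [← Finset.sum_subset hsub (by
      intro r hr hr'
      simp only [mem_Icc] at hr hr'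
      have : t < r := by omega
      rw [Nat.choose_eq_zero_of_lt this]
      simp)]
    -- now sum over Icc 2 t; relate to range (t+1)
    have hrange : ∑ r ∈ range (t+1), (-1 : ℤ) ^ r * ((r : ℤ) - 1) * (t.choose r : ℤ) = 0 := by
      have hsplit : ∀ r : ℕ, (-1 : ℤ) ^ r * ((r : ℤ) - 1) * (t.choose r : ℤ)
          = (-1 : ℤ) ^ r * (r : ℤ) * (t.choose r : ℤ) - (-1 : ℤ) ^ r * (t.choose r : ℤ) := by
        intro r; ring
      rw [Finset.sum_congr rfl (fun r _ => hsplit r), Finset.sum_sub_distrib]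
      obtain ⟨u, rfl⟩ : ∃ u, t = u + 1 + 1 := ⟨t - 2, by omega⟩
      rw [alt_sum_r_choose (u+1) (by omega), Int.alternating_sum_range_choose_of_ne (by omega)]
      ring
    have : range (t+1) = insert 0 (insert 1 (Icc 2 t)) := by
      ext r; simp [mem_Icc]; omega
    rw [this] at hrange
    rw [Finset.sum_insert (by simp), Finset.sum_insert (by simp [mem_Icc])] at hrange
    simp at hrange
    linarith
  · rw [if_neg h2]
    apply Finset.sum_eq_zero
    intro r hr
    simp only [mem_Icc] at hr
    rw [Nat.choose_eq_zero_of_lt (by omega)]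
    simp


/-- If `A_1, …, A_m` are finite sets and `A` is the set of elements lying in at
least two of them, then `|A| = Σ_{r=2}^{m} (-1)^r (r-1) Σ_{|I|=r} |∩_{i∈I} A_i|`. -/
theorem card_in_at_least_two_sets {α : Type*} (m : ℕ) (A : Fin m → Finset α) :
    (({x : α | ∃ i j : Fin m, i ≠ j ∧ x ∈ A i ∧ x ∈ A j}).ncard : ℤ) =
      ∑ r ∈ Finset.Icc 2 m, (-1 : ℤ) ^ r * ((r : ℤ) - 1) *
        ∑ I ∈ Finset.powersetCard r (Finset.univ : Finset (Fin m)),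
          (((⋂ i ∈ I, (A i : Set α)).ncard : ℤ)) := by
  classical
  set S : Finset α := Finset.univ.biUnion A with hS
  set T : α → Finset (Fin m) := fun x => Finset.univ.filter (fun i => x ∈ A i) with hT
  -- LHS
  have hset : {x : α | ∃ i j : Fin m, i ≠ j ∧ x ∈ A i ∧ x ∈ A j}
      = ↑(S.filter fun x => 2 ≤ (T x).card) := by
    ext x
    simp only [Set.mem_setOf_eq, Finset.coe_filter, Finset.mem_biUnion, Finset.mem_univ,
      true_and, hS, hT, Set.mem_setOf_eq]
    constructor
    · rintro ⟨i, j, hij, hi, hj⟩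
      refine ⟨⟨i, hi⟩, ?_⟩
      have : 1 < (Finset.univ.filter (fun i => x ∈ A i)).card :=
        Finset.one_lt_card.2 ⟨i, by simp [hi], j, by simp [hj], hij⟩
      omega
    · rintro ⟨-, h⟩
      obtain ⟨i, hi, j, hj, hij⟩ := Finset.one_lt_card.1
        (show 1 < (Finset.univ.filter (fun i => x ∈ A i)).card by omega)
      simp only [Finset.mem_filter] at hi hj
      exact ⟨i, j, hij, hi.2, hj.2⟩
  rw [hset, Set.ncard_coe_finset]
  -- RHS inner sums
  have hinter : ∀ r ∈ Finset.Icc 2 m, ∀ I ∈ Finset.powersetCard r (Finset.univ : Finset (Fin m)),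
      ((⋂ i ∈ I, (A i : Set α)).ncard : ℤ)
        = ∑ x ∈ S, (if I ⊆ T x then 1 else 0 : ℤ) := by
    intro r hr I hI
    simp only [Finset.mem_Icc] at hr
    rw [Finset.mem_powersetCard] at hI
    have hne : I.Nonempty := Finset.card_pos.1 (by omega)
    have : (⋂ i ∈ I, (A i : Set α)) = ↑(S.filter fun x => I ⊆ T x) := by
      ext x
      simp only [Set.mem_iInter, Finset.mem_coe, Finset.coe_filter, Set.mem_setOf_eq]
      constructor
      · intro h
        obtain ⟨i0, hi0⟩ := hne
        refine ⟨Finset.mem_biUnion.2 ⟨i0, Finset.mem_univ i0, h i0 hi0⟩, fun i hi => ?_⟩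
        exact Finset.mem_filter.2 ⟨Finset.mem_univ i, h i hi⟩
      · rintro ⟨-, h⟩ i hi
        exact (Finset.mem_filter.1 (h hi)).2
    rw [this, Set.ncard_coe_finset]
    exact (Finset.sum_boole _ _).symm
  rw [Finset.sum_congr rfl (fun r hr => by
    rw [Finset.sum_congr rfl (hinter r hr)])]
  -- swap sums
  have hcount : ∀ r : ℕ, ∀ x : α,
      ∑ I ∈ Finset.powersetCard r (Finset.univ : Finset (Fin m)),
        (if I ⊆ T x then 1 else 0 : ℤ) = (((T x).card.choose r : ℕ) : ℤ) := by
    intro r x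
    rw [Finset.sum_boole]
    have hfil : (Finset.powersetCard r (Finset.univ : Finset (Fin m))).filter (fun I => I ⊆ T x)
        = Finset.powersetCard r (T x) := by
      ext J
      simp only [Finset.mem_filter, Finset.mem_powersetCard, Finset.subset_univ, true_and]
      tauto
    rw [hfil, Finset.card_powersetCard]
  calc (S.filter fun x => 2 ≤ (T x).card).card
      = ∑ x ∈ S, (if 2 ≤ (T x).card then 1 else 0 : ℤ) := by
        exact_mod_cast (Finset.sum_boole (fun x => 2 ≤ (T x).card) S).symm
    _ = ∑ x ∈ S, ∑ r ∈ Finset.Icc 2 m,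
          (-1 : ℤ) ^ r * ((r : ℤ) - 1) * (((T x).card.choose r : ℕ) : ℤ) := by
        refine Finset.sum_congr rfl fun x hx => ?_
        rw [key_scalar m ((T x).card) (by
          simpa [hT] using (Finset.card_filter_le Finset.univ (fun i => x ∈ A i)).trans
            (le_of_eq (Finset.card_univ.trans (Fintype.card_fin m))))]
    _ = ∑ r ∈ Finset.Icc 2 m, (-1 : ℤ) ^ r * ((r : ℤ) - 1) *
          ∑ x ∈ S, (((T x).card.choose r : ℕ) : ℤ) := by
        rw [Finset.sum_comm]
        exact Finset.sum_congr rfl fun r _ => by rw [Finset.mul_sum]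
    _ = ∑ r ∈ Finset.Icc 2 m, (-1 : ℤ) ^ r * ((r : ℤ) - 1) *
          ∑ x ∈ S, ∑ I ∈ Finset.powersetCard r (Finset.univ : Finset (Fin m)),
            (if I ⊆ T x then 1 else 0 : ℤ) := by
        refine Finset.sum_congr rfl fun r _ => ?_
        congr 1
        exact Finset.sum_congr rfl fun x _ => (hcount r x).symm
    _ = ∑ r ∈ Finset.Icc 2 m, (-1 : ℤ) ^ r * ((r : ℤ) - 1) *
          ∑ I ∈ Finset.powersetCard r (Finset.univ : Finset (Fin m)),
            ∑ x ∈ S, (if I ⊆ T x then 1 else 0 : ℤ) := by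
        refine Finset.sum_congr rfl fun r _ => ?_
        rw [Finset.sum_comm]
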